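/- Let q = 3^(2n+1) with n ≥ 0, and let F_q be the field with q elements with θ: x ↦ x^(3ⁿ). In the group on F_q³ with the multiplication of the Sylow 3-subgroup of ²G₂(q), the number of elements of order exactly 3 is q² − 1. -/

import Mathlib

/-- In the Sylow 3-subgroup of `²G₂(q)` realized on `F_q³` (with `q = 3^(2n+1)` and
`θ : x ↦ x^(3ⁿ)`), the number of elements of order exactly 3 (i.e. with cube equal to the
identity `(0,0,0)` but not the identity) is `q² − 1`. -/
theorem ree_sylow3_card_order_three (n q : ℕ) (hq : q = 3 ^ (2 * n + 1))
    (F : Type*) [Field F] [Fintype F] (hF : Fintype.card F = q)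
    (θ : F → F) (hθ : ∀ x, θ x = x ^ 3 ^ n)
    (mul : F × F × F → F × F × F → F × F × F)
    (hmul : ∀ t₁ u₁ v₁ t₂ u₂ v₂ : F,
      mul (t₁, u₁, v₁) (t₂, u₂, v₂) =
        (t₁ + t₂, u₁ + u₂ - t₁ * (θ t₂) ^ 3,
          v₁ + v₂ - t₂ * u₁ + t₁ * ((θ t₂) ^ 3 * t₂) - t₁ ^ 2 * (θ t₂) ^ 3)) :
    Nat.card {x : F × F × F // mul (mul x x) x = (0, 0, 0) ∧ x ≠ (0, 0, 0)} = q ^ 2 - 1 := by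
  have h3 : (3 : F) = 0 := by
    have h := FiniteField.cast_card_eq_zero F
    rw [hF, hq] at h
    push_cast at h
    exact pow_eq_zero_iff (by omega) |>.mp h
  have cube : ∀ t u v : F, mul (mul (t, u, v) (t, u, v)) (t, u, v)
      = (0, 0, -(t ^ 2 * (t ^ 3 ^ n) ^ 3)) := by
    intro t u v
    rw [hmul, hmul]
    simp only [hθ, Prod.mk.injEq]
    refine ⟨by linear_combination t * h3, by
      linear_combination (u - t * (t ^ 3 ^ n) ^ 3) * h3, by
      linear_combination (v - t * u) * h3⟩
  have hcond : ∀ x : F × F × F,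
      (mul (mul x x) x = (0, 0, 0) ∧ x ≠ (0, 0, 0)) ↔ (x.1 = 0 ∧ x ≠ (0, 0, 0)) := by
    rintro ⟨t, u, v⟩
    rw [cube]
    simp only [Prod.mk.injEq, ne_eq, neg_eq_zero, mul_eq_zero, pow_eq_zero_iff,
      true_and]
    constructor
    · rintro ⟨h, h2⟩
      refine ⟨?_, h2⟩
      rcases h with h | h
      · exact pow_eq_zero_iff two_ne_zero |>.mp h
      · exact pow_eq_zero_iff (pow_ne_zero n three_ne_zero) |>.mp
          (pow_eq_zero_iff three_ne_zero |>.mp h)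
    · rintro ⟨h, h2⟩
      exact ⟨Or.inl (by rw [h]; ring), h2⟩
  have e : {x : F × F × F // mul (mul x x) x = (0, 0, 0) ∧ x ≠ (0, 0, 0)}
      ≃ {y : F × F // y ≠ 0} :=
  { toFun := fun x => ⟨x.1.2, fun h => ((hcond x.1).mp x.2).2 (by
      have h1 := ((hcond x.1).mp x.2).1
      have : x.1 = (x.1.1, x.1.2) := rfl
      rw [this, h1, h]; rfl)⟩
    invFun := fun y => ⟨(0, y.1), (hcond (0, y.1)).mpr ⟨rfl, fun h => y.2 (by
      have := congrArg Prod.snd h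
      simpa [Prod.mk_zero_zero] using this)⟩⟩
    left_inv := fun x => by
      ext
      · exact (((hcond x.1).mp x.2).1).symm
      · rfl
      · rfl
    right_inv := fun y => rfl }
  classical
  rw [Nat.card_congr e, Nat.card_eq_fintype_card]
  have h1 : Fintype.card {y : F × F // y ≠ 0} = Fintype.card (F × F) - 1 := by
    have := Fintype.card_subtype_compl (fun y : F × F => y = 0)
    simp only [Fintype.card_subtype_eq] at this
    convert this using 2
  rw [h1, Fintype.card_prod, hF]
  ring_nf
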